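/- The singular value thresholding operator H_λ is nonexpansive with respect to the Frobenius norm: ‖H_λ(M) - H_λ(N)‖_F ≤ ‖M - N‖_F for all matrices M, N of the same size and any λ ≥ 0. -/

import Mathlib

open Matrix Finset

attribute [local instance] Matrix.frobeniusNormedAddCommGroup

namespace SVTAux

variable {m n : ℕ}

def dg (m n : ℕ) (f : Fin m → ℝ) : Matrix (Fin m) (Fin n) ℂ :=
  Matrix.of fun i j => if (i : ℕ) = (j : ℕ) then (f i : ℂ) else 0

noncomputable def ip (X Y : Matrix (Fin m) (Fin n) ℂ) : ℝ := (Matrix.trace (Xᴴ * Y)).re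

def T (m n : ℕ) (f : Fin m → ℝ) : ℝ :=
  ∑ i : Fin m, ∑ p : Fin n, if (i : ℕ) = (p : ℕ) then f i else 0

lemma ip_eq_sum (X : Matrix (Fin m) (Fin n) ℂ) :
    ip X X = ∑ i : Fin m, ∑ p : Fin n, ‖X i p‖ ^ 2 := by
  simp only [ip, Matrix.trace, Matrix.diag, Matrix.mul_apply, Matrix.conjTranspose_apply,
      Complex.re_sum]
  rw [Finset.sum_comm]
  congr 1; ext i; congr 1; ext p
  rw [mul_comm, Complex.star_def, Complex.mul_conj]
  rw [Complex.ofReal_re, ← Complex.sq_norm]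

lemma ip_self (X : Matrix (Fin m) (Fin n) ℂ) : ip X X = ‖X‖ ^ 2 := by
  rw [ip_eq_sum, Matrix.frobenius_norm_def]
  have h2 : (0:ℝ) ≤ ∑ i : Fin m, ∑ p : Fin n, ‖X i p‖ ^ (2:ℝ) := by positivity
  rw [← Real.rpow_natCast ((∑ i : Fin m, ∑ p : Fin n, ‖X i p‖ ^ (2:ℝ)) ^ (1/2:ℝ)) 2,
    ← Real.rpow_mul h2]
  norm_num only
  rw [Real.rpow_one]
  congr 1; ext i; congr 1; ext p
  rw [← Real.rpow_natCast ‖X i p‖ 2]; norm_num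

lemma frob_norm_sqrt (X : Matrix (Fin m) (Fin n) ℂ) :
    ‖X‖ = Real.sqrt (∑ i : Fin m, ∑ p : Fin n, ‖X i p‖ ^ 2) := by
  rw [← ip_eq_sum, ip_self, Real.sqrt_sq (norm_nonneg X)]

lemma ip_le (X Y : Matrix (Fin m) (Fin n) ℂ) : ip X Y ≤ ‖X‖ * ‖Y‖ := by
  have h1 : ip X Y ≤ ∑ ip' : Fin m × Fin n, ‖X ip'.1 ip'.2‖ * ‖Y ip'.1 ip'.2‖ := by
    simp only [ip, Matrix.trace, Matrix.diag, Matrix.mul_apply, Matrix.conjTranspose_apply,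
      Complex.re_sum]
    rw [Finset.sum_comm, ← Fintype.sum_prod_type']
    apply Finset.sum_le_sum
    intro q _
    calc (star (X q.1 q.2) * Y q.1 q.2).re ≤ ‖star (X q.1 q.2) * Y q.1 q.2‖ :=
          Complex.re_le_norm _
      _ = ‖X q.1 q.2‖ * ‖Y q.1 q.2‖ := by
          rw [norm_mul]
          simp
  refine h1.trans ?_
  have h2 := Real.sum_mul_le_sqrt_mul_sqrt Finset.univ
    (fun ip' : Fin m × Fin n => ‖X ip'.1 ip'.2‖) (fun ip' => ‖Y ip'.1 ip'.2‖)
  refine h2.trans (le_of_eq ?_)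
  rw [frob_norm_sqrt X, frob_norm_sqrt Y, ← Fintype.sum_prod_type', ← Fintype.sum_prod_type']


lemma sum_ite_le {k : ℕ} (c : ℕ) (x : ℝ) (hx : 0 ≤ x) :
    ∑ q : Fin k, (if c = (q : ℕ) then x else 0) ≤ x := by
  by_cases h : c < k
  · rw [Finset.sum_eq_single (⟨c, h⟩ : Fin k)]
    · simp
    · intro b _ hb
      rw [if_neg]
      intro hc
      exact hb (by apply Fin.ext; simp [← hc])
    · simp
  · have h2 : ∀ q : Fin k, ¬(c = (q : ℕ)) := fun q hq => h (hq ▸ q.isLt)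
    simp only [h2, if_false, Finset.sum_const_zero]
    exact hx

lemma trace_dg_left (f : Fin m → ℝ) (Z : Matrix (Fin m) (Fin n) ℂ) :
    Matrix.trace ((dg m n f)ᴴ * Z) =
      ∑ i : Fin m, ∑ p : Fin n, (if (i : ℕ) = (p : ℕ) then (f i : ℂ) else 0) * Z i p := by
  simp only [Matrix.trace, Matrix.diag, Matrix.mul_apply, Matrix.conjTranspose_apply, dg,
    Matrix.of_apply]
  rw [Finset.sum_comm]
  congr 1; ext i; congr 1; ext p
  congr 1
  split_ifs <;> simp

lemma trace_red (f g : Fin m → ℝ) (U U' : Matrix (Fin m) (Fin m) ℂ)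
    (V V' : Matrix (Fin n) (Fin n) ℂ) :
    Matrix.trace ((U * dg m n f * Vᴴ)ᴴ * (U' * dg m n g * V'ᴴ)) =
      Matrix.trace ((dg m n f)ᴴ * ((Uᴴ * U') * dg m n g * (V'ᴴ * V))) := by
  rw [Matrix.conjTranspose_mul, Matrix.conjTranspose_mul, Matrix.conjTranspose_conjTranspose]
  have : (V * ((dg m n f)ᴴ * Uᴴ)) * (U' * dg m n g * V'ᴴ) =
      V * ((dg m n f)ᴴ * Uᴴ * (U' * dg m n g * V'ᴴ)) := by
    simp only [Matrix.mul_assoc]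
  rw [this, Matrix.trace_mul_comm]
  simp only [Matrix.mul_assoc]

lemma entry_bound (lam : ℝ) (hlam : 0 ≤ lam) (g : Fin m → ℝ) (hg0 : ∀ j, 0 ≤ g j)
    (hgl : ∀ j, g j ≤ lam) (A : Matrix (Fin m) (Fin m) ℂ) (C : Matrix (Fin n) (Fin n) ℂ)
    (i : Fin m) (p : Fin n) (hA : ∑ j, ‖A i j‖ ^ 2 ≤ 1) (hC : ∑ q, ‖C q p‖ ^ 2 ≤ 1) :
    ‖(A * dg m n g * C) i p‖ ≤ lam := by
  have hexp : (A * dg m n g * C) i p =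
      ∑ q : Fin n, ∑ j : Fin m, (if (j : ℕ) = (q : ℕ) then (g j : ℂ) else 0) *
        (A i j * C q p) := by
    simp only [Matrix.mul_apply, dg, Matrix.of_apply, Finset.sum_mul]
    congr 1; ext q; congr 1; ext j
    ring
  rw [hexp]
  calc ‖∑ q : Fin n, ∑ j : Fin m, (if (j : ℕ) = (q : ℕ) then (g j : ℂ) else 0) *
        (A i j * C q p)‖
      ≤ ∑ q : Fin n, ∑ j : Fin m,
          (if (j : ℕ) = (q : ℕ) then g j else 0) * (‖A i j‖ * ‖C q p‖) := by
        refine (norm_sum_le _ _).trans (Finset.sum_le_sum fun q _ => ?_)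
        refine (norm_sum_le _ _).trans (Finset.sum_le_sum fun j _ => ?_)
        rw [norm_mul, norm_mul]
        split_ifs with h
        · simp only [Complex.norm_real]
          rw [Real.norm_of_nonneg (hg0 j)]
        · simp
    _ ≤ ∑ q : Fin n, ∑ j : Fin m,
          lam * ((if (j : ℕ) = (q : ℕ) then ‖A i j‖ else 0) *
            (if (j : ℕ) = (q : ℕ) then ‖C q p‖ else 0)) := by
        refine Finset.sum_le_sum fun q _ => Finset.sum_le_sum fun j _ => ?_
        split_ifs with h
        · have := hgl j
          have h1 : (0:ℝ) ≤ ‖A i j‖ * ‖C q p‖ := by positivity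
          nlinarith
        · simp
    _ = lam * ∑ qj : Fin n × Fin m,
          ((if (qj.2 : ℕ) = (qj.1 : ℕ) then ‖A i qj.2‖ else 0) *
            (if (qj.2 : ℕ) = (qj.1 : ℕ) then ‖C qj.1 p‖ else 0)) := by
        rw [← Fintype.sum_prod_type', ← Finset.mul_sum]
    _ ≤ lam * 1 := by
        refine mul_le_mul_of_nonneg_left ?_ hlam
        refine (Real.sum_mul_le_sqrt_mul_sqrt Finset.univ _ _).trans ?_
        have e1 : ∑ qj : Fin n × Fin m,
            (if (qj.2 : ℕ) = (qj.1 : ℕ) then ‖A i qj.2‖ else 0) ^ 2 ≤ 1 := by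
          rw [Fintype.sum_prod_type]
          rw [Finset.sum_comm]
          refine le_trans (Finset.sum_le_sum fun j _ => ?_) hA
          have : ∀ q : Fin n, (if (j : ℕ) = (q : ℕ) then ‖A i j‖ else 0) ^ 2 =
              (if (j : ℕ) = (q : ℕ) then ‖A i j‖ ^ 2 else 0) := by
            intro q; split_ifs <;> simp
          simp only [this]
          exact sum_ite_le _ _ (by positivity)
        have e2 : ∑ qj : Fin n × Fin m,
            (if (qj.2 : ℕ) = (qj.1 : ℕ) then ‖C qj.1 p‖ else 0) ^ 2 ≤ 1 := by
          rw [Fintype.sum_prod_type]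
          refine le_trans (Finset.sum_le_sum fun q _ => ?_) hC
          have : ∀ j : Fin m, (if (j : ℕ) = (q : ℕ) then ‖C q p‖ else 0) ^ 2 =
              (if (q : ℕ) = (j : ℕ) then ‖C q p‖ ^ 2 else 0) := by
            intro j
            by_cases h : (j : ℕ) = (q : ℕ)
            · rw [if_pos h, if_pos h.symm]
            · rw [if_neg h, if_neg fun hq => h hq.symm]
              norm_num
          simp only [this]
          exact sum_ite_le _ _ (by positivity)
        calc Real.sqrt _ * Real.sqrt _ ≤ Real.sqrt 1 * Real.sqrt 1 :=
              mul_le_mul (Real.sqrt_le_sqrt e1) (Real.sqrt_le_sqrt e2)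
                (Real.sqrt_nonneg _) (Real.sqrt_nonneg _)
          _ = 1 := by simp
    _ = lam := mul_one lam

lemma row_norm (A : Matrix (Fin m) (Fin m) ℂ) (hA : A * Aᴴ = 1) (i : Fin m) :
    ∑ j, ‖A i j‖ ^ 2 ≤ 1 := by
  have h1 : (A * Aᴴ) i i = 1 := by rw [hA]; simp [Matrix.one_apply]
  have h2 : ((A * Aᴴ) i i).re = ∑ j, ‖A i j‖ ^ 2 := by
    simp only [Matrix.mul_apply, Matrix.conjTranspose_apply, Complex.re_sum]
    congr 1 with j
    rw [Complex.star_def, Complex.mul_conj, Complex.ofReal_re, ← Complex.sq_norm]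
  rw [← h2, h1]
  simp

lemma col_norm (C : Matrix (Fin n) (Fin n) ℂ) (hC : Cᴴ * C = 1) (p : Fin n) :
    ∑ q, ‖C q p‖ ^ 2 ≤ 1 := by
  have h1 : (Cᴴ * C) p p = 1 := by rw [hC]; simp [Matrix.one_apply]
  have h2 : ((Cᴴ * C) p p).re = ∑ q, ‖C q p‖ ^ 2 := by
    simp only [Matrix.mul_apply, Matrix.conjTranspose_apply, Complex.re_sum]
    congr 1 with q
    rw [mul_comm, Complex.star_def, Complex.mul_conj, Complex.ofReal_re, ← Complex.sq_norm]
  rw [← h2, h1]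
  simp

lemma cross_bound (lam : ℝ) (hlam : 0 ≤ lam) (f g : Fin m → ℝ) (hf : ∀ i, 0 ≤ f i)
    (hg0 : ∀ j, 0 ≤ g j) (hgl : ∀ j, g j ≤ lam)
    (A : Matrix (Fin m) (Fin m) ℂ) (C : Matrix (Fin n) (Fin n) ℂ)
    (hA : A * Aᴴ = 1) (hC : Cᴴ * C = 1) :
    (Matrix.trace ((dg m n f)ᴴ * (A * dg m n g * C))).re ≤ lam * T m n f := by
  rw [trace_dg_left]
  have key : ∀ (i : Fin m) (p : Fin n),
      ((if (i : ℕ) = (p : ℕ) then (f i : ℂ) else 0) * (A * dg m n g * C) i p).re ≤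
        (if (i : ℕ) = (p : ℕ) then f i else 0) * lam := by
    intro i p
    split_ifs with h
    · refine (Complex.re_le_norm _).trans ?_
      rw [norm_mul]
      have h1 : ‖(f i : ℂ)‖ = f i := by
        rw [Complex.norm_real, Real.norm_of_nonneg (hf i)]
      rw [h1]
      have h2 : ‖(A * dg m n g * C) i p‖ ≤ lam := by
        exact entry_bound lam hlam g hg0 hgl A C i p (row_norm A hA i) (col_norm C hC p)
      exact mul_le_mul_of_nonneg_left h2 (hf i)
    · simp
  calc (∑ i : Fin m, ∑ p : Fin n,
        (if (i : ℕ) = (p : ℕ) then (f i : ℂ) else 0) * (A * dg m n g * C) i p).re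
      = ∑ i : Fin m, ∑ p : Fin n,
          ((if (i : ℕ) = (p : ℕ) then (f i : ℂ) else 0) * (A * dg m n g * C) i p).re := by
        simp [Complex.re_sum]
    _ ≤ ∑ i : Fin m, ∑ p : Fin n, (if (i : ℕ) = (p : ℕ) then f i else 0) * lam :=
        Finset.sum_le_sum fun i _ => Finset.sum_le_sum fun p _ => key i p
    _ = lam * T m n f := by
        rw [T, Finset.mul_sum]
        congr 1 with i
        rw [Finset.mul_sum]
        congr 1 with p
        ring

lemma ip_diag (f g : Fin m → ℝ) :
    (Matrix.trace ((dg m n f)ᴴ * dg m n g)).re =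
      ∑ i : Fin m, ∑ p : Fin n, (if (i : ℕ) = (p : ℕ) then f i * g i else 0) := by
  rw [trace_dg_left]
  simp only [Complex.re_sum]
  congr 1 with i; congr 1 with p
  by_cases h : (i : ℕ) = (p : ℕ)
  · rw [if_pos h, if_pos h]
    simp only [dg, Matrix.of_apply, if_pos h]
    rw [← Complex.ofReal_mul, Complex.ofReal_re]
  · rw [if_neg h, if_neg h]
    simp

lemma ip_def (X Y : Matrix (Fin m) (Fin n) ℂ) :
    ip X Y = (Matrix.trace (Xᴴ * Y)).re := rfl

lemma ip_sub_sub (X Y Z W : Matrix (Fin m) (Fin n) ℂ) :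
    ip (X - Y) (Z - W) = ip X Z - ip X W - (ip Y Z - ip Y W) := by
  simp only [ip, Matrix.conjTranspose_sub, Matrix.sub_mul, Matrix.mul_sub, Matrix.trace_sub,
    Complex.sub_re]
  ring

lemma ip_add_right (X Y Z : Matrix (Fin m) (Fin n) ℂ) :
    ip X (Y + Z) = ip X Y + ip X Z := by
  simp only [ip, Matrix.mul_add, Matrix.trace_add, Complex.add_re]

end SVTAux

set_option maxHeartbeats 1000000 in
open SVTAux in
/-- SVT is nonexpansive in the Frobenius norm. -/
theorem svt_nonexpansive_frobenius {m n : ℕ} (lam : ℝ) (hlam : 0 ≤ lam)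
    (UM : Matrix (Fin m) (Fin m) ℂ) (VM : Matrix (Fin n) (Fin n) ℂ)
    (UN : Matrix (Fin m) (Fin m) ℂ) (VN : Matrix (Fin n) (Fin n) ℂ)
    (hUM : UM ∈ Matrix.unitaryGroup (Fin m) ℂ) (hVM : VM ∈ Matrix.unitaryGroup (Fin n) ℂ)
    (hUN : UN ∈ Matrix.unitaryGroup (Fin m) ℂ) (hVN : VN ∈ Matrix.unitaryGroup (Fin n) ℂ)
    (sM sN : Fin m → ℝ) (hsM : ∀ i, 0 ≤ sM i) (hsN : ∀ i, 0 ≤ sN i)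
    (M N HM HN : Matrix (Fin m) (Fin n) ℂ)
    (hM : M = UM * (Matrix.of fun (i : Fin m) (j : Fin n) =>
      if (i : ℕ) = (j : ℕ) then (sM i : ℂ) else 0) * VMᴴ)
    (hN : N = UN * (Matrix.of fun (i : Fin m) (j : Fin n) =>
      if (i : ℕ) = (j : ℕ) then (sN i : ℂ) else 0) * VNᴴ)
    (hHM : HM = UM * (Matrix.of fun (i : Fin m) (j : Fin n) =>
      if (i : ℕ) = (j : ℕ) then ((max (sM i - lam) 0 : ℝ) : ℂ) else 0) * VMᴴ)
    (hHN : HN = UN * (Matrix.of fun (i : Fin m) (j : Fin n) =>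
      if (i : ℕ) = (j : ℕ) then ((max (sN i - lam) 0 : ℝ) : ℂ) else 0) * VNᴴ) :
    ‖HM - HN‖ ≤ ‖M - N‖ := by
  classical
  -- unitarity facts
  have hUM1 : UMᴴ * UM = 1 := by
    rw [← Matrix.star_eq_conjTranspose]; exact Unitary.star_mul_self_of_mem hUM
  have hUM2 : UM * UMᴴ = 1 := by
    rw [← Matrix.star_eq_conjTranspose]; exact Unitary.mul_star_self_of_mem hUM
  have hVM1 : VMᴴ * VM = 1 := by
    rw [← Matrix.star_eq_conjTranspose]; exact Unitary.star_mul_self_of_mem hVM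
  have hVM2 : VM * VMᴴ = 1 := by
    rw [← Matrix.star_eq_conjTranspose]; exact Unitary.mul_star_self_of_mem hVM
  have hUN1 : UNᴴ * UN = 1 := by
    rw [← Matrix.star_eq_conjTranspose]; exact Unitary.star_mul_self_of_mem hUN
  have hUN2 : UN * UNᴴ = 1 := by
    rw [← Matrix.star_eq_conjTranspose]; exact Unitary.mul_star_self_of_mem hUN
  have hVN1 : VNᴴ * VN = 1 := by
    rw [← Matrix.star_eq_conjTranspose]; exact Unitary.star_mul_self_of_mem hVN
  have hVN2 : VN * VNᴴ = 1 := by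
    rw [← Matrix.star_eq_conjTranspose]; exact Unitary.mul_star_self_of_mem hVN
  set fM : Fin m → ℝ := fun i => max (sM i - lam) 0 with hfM
  set fN : Fin m → ℝ := fun i => max (sN i - lam) 0 with hfN
  set gM : Fin m → ℝ := fun i => sM i - fM i with hgM
  set gN : Fin m → ℝ := fun i => sN i - fN i with hgN
  have hfM0 : ∀ i, 0 ≤ fM i := fun i => le_max_right _ _
  have hfN0 : ∀ i, 0 ≤ fN i := fun i => le_max_right _ _
  have hgM0 : ∀ i, 0 ≤ gM i := by
    intro i; simp only [hgM]
    have : fM i ≤ sM i := max_le (by linarith) (hsM i)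
    linarith
  have hgN0 : ∀ i, 0 ≤ gN i := by
    intro i; simp only [hgN]
    have : fN i ≤ sN i := max_le (by linarith) (hsN i)
    linarith
  have hgMl : ∀ i, gM i ≤ lam := by
    intro i; simp only [hgM]
    have : sM i - lam ≤ fM i := le_max_left _ _
    linarith
  have hgNl : ∀ i, gN i ≤ lam := by
    intro i; simp only [hgN]
    have : sN i - lam ≤ fN i := le_max_left _ _
    linarith
  have hprodM : ∀ i, fM i * gM i = lam * fM i := by
    intro i
    rcases le_total (sM i) lam with h | h
    · have : fM i = 0 := max_eq_right (by linarith)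
      rw [this]; ring
    · have h1 : fM i = sM i - lam := max_eq_left (by linarith)
      simp only [hgM, h1]; ring
  have hprodN : ∀ i, fN i * gN i = lam * fN i := by
    intro i
    rcases le_total (sN i) lam with h | h
    · have : fN i = 0 := max_eq_right (by linarith)
      rw [this]; ring
    · have h1 : fN i = sN i - lam := max_eq_left (by linarith)
      simp only [hgN, h1]; ring
  -- rewrite matrices in dg form
  have hM' : M = UM * dg m n sM * VMᴴ := hM
  have hN' : N = UN * dg m n sN * VNᴴ := hN
  have hHM' : HM = UM * dg m n fM * VMᴴ := by rw [hHM, hfM]; rfl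
  have hHN' : HN = UN * dg m n fN * VNᴴ := by rw [hHN, hfN]; rfl
  have hdgM : dg m n sM - dg m n fM = dg m n gM := by
    ext i j
    simp only [Matrix.sub_apply, dg, Matrix.of_apply, hgM]
    split_ifs <;> push_cast <;> ring
  have hdgN : dg m n sN - dg m n fN = dg m n gN := by
    ext i j
    simp only [Matrix.sub_apply, dg, Matrix.of_apply, hgN]
    split_ifs <;> push_cast <;> ring
  have hGM : M - HM = UM * dg m n gM * VMᴴ := by
    rw [hM', hHM', ← Matrix.sub_mul, ← Matrix.mul_sub, hdgM]
  have hGN : N - HN = UN * dg m n gN * VNᴴ := by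
    rw [hN', hHN', ← Matrix.sub_mul, ← Matrix.mul_sub, hdgN]
  -- the four inner products
  have vMM : ip HM (M - HM) = lam * T m n fM := by
    rw [hGM, hHM', ip_def, trace_red, hUM1, hVM1, Matrix.one_mul, Matrix.mul_one, ip_diag]
    rw [T, Finset.mul_sum]
    congr 1 with i
    rw [Finset.mul_sum]
    congr 1 with p
    rw [hprodM i]
    split_ifs <;> ring
  have vNN : ip HN (N - HN) = lam * T m n fN := by
    rw [hGN, hHN', ip_def, trace_red, hUN1, hVN1, Matrix.one_mul, Matrix.mul_one, ip_diag]
    rw [T, Finset.mul_sum]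
    congr 1 with i
    rw [Finset.mul_sum]
    congr 1 with p
    rw [hprodN i]
    split_ifs <;> ring
  have cMN : ip HM (N - HN) ≤ lam * T m n fM := by
    rw [hGN, hHM', ip_def, trace_red]
    have hA : (UMᴴ * UN) * (UMᴴ * UN)ᴴ = 1 := by
      rw [Matrix.conjTranspose_mul, Matrix.conjTranspose_conjTranspose]
      calc UMᴴ * UN * (UNᴴ * UM) = UMᴴ * (UN * UNᴴ) * UM := by
            simp only [Matrix.mul_assoc]
        _ = 1 := by rw [hUN2, Matrix.mul_one, hUM1]
    have hC : (VNᴴ * VM)ᴴ * (VNᴴ * VM) = 1 := by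
      rw [Matrix.conjTranspose_mul, Matrix.conjTranspose_conjTranspose]
      calc VMᴴ * VN * (VNᴴ * VM) = VMᴴ * (VN * VNᴴ) * VM := by
            simp only [Matrix.mul_assoc]
        _ = 1 := by rw [hVN2, Matrix.mul_one, hVM1]
    exact cross_bound lam hlam fM gN hfM0 hgN0 hgNl _ _ hA hC
  have cNM : ip HN (M - HM) ≤ lam * T m n fN := by
    rw [hGM, hHN', ip_def, trace_red]
    have hA : (UNᴴ * UM) * (UNᴴ * UM)ᴴ = 1 := by
      rw [Matrix.conjTranspose_mul, Matrix.conjTranspose_conjTranspose]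
      calc UNᴴ * UM * (UMᴴ * UN) = UNᴴ * (UM * UMᴴ) * UN := by
            simp only [Matrix.mul_assoc]
        _ = 1 := by rw [hUM2, Matrix.mul_one, hUN1]
    have hC : (VMᴴ * VN)ᴴ * (VMᴴ * VN) = 1 := by
      rw [Matrix.conjTranspose_mul, Matrix.conjTranspose_conjTranspose]
      calc VNᴴ * VM * (VMᴴ * VN) = VNᴴ * (VM * VMᴴ) * VN := by
            simp only [Matrix.mul_assoc]
        _ = 1 := by rw [hVM2, Matrix.mul_one, hVN1]
    exact cross_bound lam hlam fN gM hfN0 hgM0 hgMl _ _ hA hC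
  -- firm nonexpansiveness
  have hsplit : M - N = (HM - HN) + ((M - HM) - (N - HN)) := by abel
  have h1 : ip (HM - HN) (M - N) =
      ip (HM - HN) (HM - HN) + ip (HM - HN) ((M - HM) - (N - HN)) := by
    rw [hsplit, ip_add_right]
  have h2 : 0 ≤ ip (HM - HN) ((M - HM) - (N - HN)) := by
    rw [ip_sub_sub]
    linarith
  have h3 : ‖HM - HN‖ ^ 2 ≤ ip (HM - HN) (M - N) := by
    rw [h1, ip_self]
    linarith
  have h4 : ip (HM - HN) (M - N) ≤ ‖HM - HN‖ * ‖M - N‖ := ip_le _ _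
  nlinarith [norm_nonneg (HM - HN), norm_nonneg (M - N)]
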